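/- Let Z ~ N(0,1), let σ: ℝ → [0,1] be measurable, and define f_δ(t) = E[log(2/(1 + e^{−t·σ(Z)}))] + E[log(2/(1 + e^{t·σ(Z+δ)}))]. Then f_δ(0) = 0, f_δ'(0) = (1/2)(E σ(Z) − E σ(Z+δ)), and f_δ''(t) ≥ −1/2 for all t. -/

import Mathlib

open MeasureTheory ProbabilityTheory

noncomputable def hh (x t : ℝ) : ℝ := Real.log (2 / (1 + Real.exp (-t * x)))
noncomputable def hh1 (x t : ℝ) : ℝ := x / (1 + Real.exp (t * x))
noncomputable def hh2 (x t : ℝ) : ℝ := -(x ^ 2 * Real.exp (t * x) / (1 + Real.exp (t * x)) ^ 2)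

lemma one_add_exp_pos (a : ℝ) : 0 < 1 + Real.exp a := by positivity

lemma hd1 (x t : ℝ) : HasDerivAt (hh x) (hh1 x t) t := by
  have hpos : ∀ s : ℝ, 0 < 1 + Real.exp (-s * x) := fun s => one_add_exp_pos _
  have heq : hh x = fun s => Real.log 2 - Real.log (1 + Real.exp (-s * x)) := by
    funext s
    rw [hh, Real.log_div two_ne_zero (hpos s).ne']
  rw [heq]
  have h1 : HasDerivAt (fun s : ℝ => -s * x) (-x) t := by
    simpa using ((hasDerivAt_id t).neg.mul_const x)
  have h2 : HasDerivAt (fun s : ℝ => 1 + Real.exp (-s * x))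
      (Real.exp (-t * x) * (-x)) t := ((h1.exp)).const_add 1
  have h3 := (h2.log (hpos t).ne').const_sub (Real.log 2)
  refine h3.congr_deriv ?_
  symm
  rw [hh1]
  have he := Real.exp_ne_zero (t * x)
  field_simp
  have hme : Real.exp (-(t * x)) * Real.exp (t * x) = 1 := by
    rw [← Real.exp_add]; simp
  ring_nf at hme ⊢
  linear_combination (-x) * hme

lemma hd2 (x t : ℝ) : HasDerivAt (hh1 x) (hh2 x t) t := by
  have h1 : HasDerivAt (fun s : ℝ => s * x) x t := by
    simpa using (hasDerivAt_id t).mul_const x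
  have hv : HasDerivAt (fun s : ℝ => 1 + Real.exp (s * x)) (Real.exp (t * x) * x) t :=
    (h1.exp).const_add 1
  have := (hasDerivAt_const t x).div hv (one_add_exp_pos (t * x)).ne'
  refine this.congr_deriv ?_
  symm
  rw [hh2]
  ring

lemma hh1_abs_le (x t : ℝ) : |hh1 x t| ≤ |x| := by
  rw [hh1, abs_div, abs_of_pos (one_add_exp_pos _)]
  exact div_le_self (abs_nonneg x) (by linarith [Real.exp_pos (t * x)])

lemma hh2_lower (x t : ℝ) (hx : |x| ≤ 1) : -(1 / 4) ≤ hh2 x t := by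
  rw [hh2, neg_le_neg_iff]
  have he := Real.exp_pos (t * x)
  have hx2 : x ^ 2 ≤ 1 := by nlinarith [abs_nonneg x, sq_abs x]
  have h4 : Real.exp (t * x) / (1 + Real.exp (t * x)) ^ 2 ≤ 1 / 4 := by
    rw [div_le_div_iff₀ (by positivity) (by norm_num)]
    nlinarith [sq_nonneg (1 - Real.exp (t * x))]
  have : x ^ 2 * Real.exp (t * x) / (1 + Real.exp (t * x)) ^ 2
      = x ^ 2 * (Real.exp (t * x) / (1 + Real.exp (t * x)) ^ 2) := by ring
  rw [this]
  nlinarith [sq_nonneg x]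

lemma hh2_abs_le (x t : ℝ) (hx : |x| ≤ 1) : |hh2 x t| ≤ 1 / 4 := by
  have h1 := hh2_lower x t hx
  have h2 : hh2 x t ≤ 0 := by
    rw [hh2, neg_nonpos]
    positivity
  rw [abs_le]; constructor <;> linarith

lemma hh_abs_le (x t : ℝ) (hx : |x| ≤ 1) : |hh x t| ≤ |t| := by
  have hlip : LipschitzWith 1 (hh x) := by
    apply lipschitzWith_of_nnnorm_deriv_le (fun s => (hd1 x s).differentiableAt)
    intro s
    rw [(hd1 x s).deriv]
    rw [← NNReal.coe_le_coe]
    push_cast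
    calc ‖hh1 x s‖ = |hh1 x s| := rfl
      _ ≤ |x| := hh1_abs_le x s
      _ ≤ 1 := hx
  have h0 : hh x 0 = 0 := by norm_num [hh]
  have := hlip.dist_le_mul t 0
  simpa [Real.dist_eq, h0] using this

lemma cont_hh (t : ℝ) : Continuous fun x => hh x t := by
  apply Continuous.log
  · exact continuous_const.div
      (continuous_const.add ((continuous_const.mul continuous_id).rexp))
      (fun x => (one_add_exp_pos _).ne')
  · intro x
    positivity

lemma cont_hh1 (t : ℝ) : Continuous fun x => hh1 x t := by
  show Continuous fun x => x / (1 + Real.exp (t * x))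
  exact continuous_id.div
    (continuous_const.add ((continuous_const.mul continuous_id).rexp))
    (fun x => (one_add_exp_pos _).ne')

lemma cont_hh2 (t : ℝ) : Continuous fun x => hh2 x t := by
  show Continuous fun x => -(x ^ 2 * Real.exp (t * x) / (1 + Real.exp (t * x)) ^ 2)
  apply Continuous.neg
  apply Continuous.div
  · exact (continuous_pow 2).mul ((continuous_const.mul continuous_id).rexp)
  · exact (continuous_const.add ((continuous_const.mul continuous_id).rexp)).pow 2
  · intro x
    positivity

lemma int_of_bdd {μ : Measure ℝ} [IsFiniteMeasure μ] {f : ℝ → ℝ} (C : ℝ)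
    (hm : AEStronglyMeasurable f μ) (h : ∀ z, |f z| ≤ C) : Integrable f μ :=
  ⟨hm, HasFiniteIntegral.of_bounded (C := C) (ae_of_all _ h)⟩

section key
variable {μ : Measure ℝ} [IsProbabilityMeasure μ] {ψ : ℝ → ℝ}

lemma meas_comp (hm : Measurable ψ) (g : ℝ → ℝ) (hg : Continuous fun x => g x) :
    AEStronglyMeasurable (fun z => g (ψ z)) μ :=
  (hg.measurable.comp hm).aestronglyMeasurable

lemma keyDeriv1 (hm : Measurable ψ) (hb : ∀ z, |ψ z| ≤ 1) (t : ℝ) :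
    HasDerivAt (fun s => ∫ z, hh (ψ z) s ∂μ) (∫ z, hh1 (ψ z) t ∂μ) t := by
  refine (hasDerivAt_integral_of_dominated_loc_of_deriv_le (bound := fun _ => 1)
    (F' := fun s z => hh1 (ψ z) s) (Metric.ball_mem_nhds t one_pos) ?_ ?_ ?_ ?_ ?_ ?_).2
  · exact Filter.Eventually.of_forall fun s => meas_comp hm _ (cont_hh s)
  · exact int_of_bdd |t| (meas_comp hm _ (cont_hh t)) (fun z => hh_abs_le _ t (hb z))
  · exact meas_comp hm _ (cont_hh1 t)
  · exact ae_of_all _ fun z s _ => le_trans (hh1_abs_le _ s) (hb z)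
  · exact integrable_const 1
  · exact ae_of_all _ fun z s _ => hd1 (ψ z) s

lemma keyDeriv2 (hm : Measurable ψ) (hb : ∀ z, |ψ z| ≤ 1) (t : ℝ) :
    HasDerivAt (fun s => ∫ z, hh1 (ψ z) s ∂μ) (∫ z, hh2 (ψ z) t ∂μ) t := by
  refine (hasDerivAt_integral_of_dominated_loc_of_deriv_le (bound := fun _ => 1 / 4)
    (F' := fun s z => hh2 (ψ z) s) (Metric.ball_mem_nhds t one_pos) ?_ ?_ ?_ ?_ ?_ ?_).2
  · exact Filter.Eventually.of_forall fun s => meas_comp hm _ (cont_hh1 s)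
  · exact int_of_bdd 1 (meas_comp hm _ (cont_hh1 t))
      (fun z => le_trans (hh1_abs_le _ t) (hb z))
  · exact meas_comp hm _ (cont_hh2 t)
  · exact ae_of_all _ fun z s _ => hh2_abs_le _ s (hb z)
  · exact integrable_const (1 / 4)
  · exact ae_of_all _ fun z s _ => hd2 (ψ z) s

lemma key_int_lower (hm : Measurable ψ) (hb : ∀ z, |ψ z| ≤ 1) (t : ℝ) :
    -(1 / 4 : ℝ) ≤ ∫ z, hh2 (ψ z) t ∂μ := by
  have h := integral_mono (μ := μ) (integrable_const (-(1 / 4) : ℝ))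
    (int_of_bdd (1 / 4) (meas_comp hm _ (cont_hh2 t)) (fun z => hh2_abs_le _ t (hb z)))
    (fun z => hh2_lower _ t (hb z))
  simpa using h

end key
/-- For `Z ~ N(0,1)` and `σ : ℝ → [0,1]`, the function
`f_δ(t) = E log(2/(1+e^{−tσ(Z)})) + E log(2/(1+e^{tσ(Z+δ)}))` satisfies
`f_δ(0) = 0`, `f_δ'(0) = (1/2)(Eσ(Z) − Eσ(Z+δ))` and `f_δ'' ≥ −1/2`. -/
theorem f_delta_properties
    (σ : ℝ → ℝ) (hσm : Measurable σ) (hσ : ∀ z, σ z ∈ Set.Icc (0 : ℝ) 1) (δ : ℝ) :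
    (fun t : ℝ =>
        (∫ z, Real.log (2 / (1 + Real.exp (-t * σ z))) ∂(gaussianReal 0 1)) +
        (∫ z, Real.log (2 / (1 + Real.exp (t * σ (z + δ)))) ∂(gaussianReal 0 1))) 0 = 0 ∧
    HasDerivAt
      (fun t : ℝ =>
        (∫ z, Real.log (2 / (1 + Real.exp (-t * σ z))) ∂(gaussianReal 0 1)) +
        (∫ z, Real.log (2 / (1 + Real.exp (t * σ (z + δ)))) ∂(gaussianReal 0 1)))
      ((1 / 2) * ((∫ z, σ z ∂(gaussianReal 0 1)) - (∫ z, σ (z + δ) ∂(gaussianReal 0 1)))) 0 ∧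
    ∀ t : ℝ, -(1 / 2) ≤
      deriv (deriv (fun t : ℝ =>
        (∫ z, Real.log (2 / (1 + Real.exp (-t * σ z))) ∂(gaussianReal 0 1)) +
        (∫ z, Real.log (2 / (1 + Real.exp (t * σ (z + δ)))) ∂(gaussianReal 0 1)))) t := by
  have hb1 : ∀ z, |σ z| ≤ 1 := fun z => abs_le.2 ⟨by linarith [(hσ z).1], (hσ z).2⟩
  have hm2 : Measurable (fun z => -(σ (z + δ))) := (hσm.comp (measurable_add_const δ)).neg
  have hb2 : ∀ z, |(-(σ (z + δ)))| ≤ 1 := fun z => by rw [abs_neg]; exact hb1 (z + δ)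
  have hF : (fun t : ℝ =>
        (∫ z, Real.log (2 / (1 + Real.exp (-t * σ z))) ∂(gaussianReal 0 1)) +
        (∫ z, Real.log (2 / (1 + Real.exp (t * σ (z + δ)))) ∂(gaussianReal 0 1)))
      = fun t => (∫ z, hh (σ z) t ∂(gaussianReal 0 1)) +
        (∫ z, hh (-(σ (z + δ))) t ∂(gaussianReal 0 1)) := by
    funext t
    simp only [hh, neg_mul_neg]
  rw [hF]
  refine ⟨?_, ?_, ?_⟩
  · norm_num [hh]
  · have h1 := keyDeriv1 (μ := gaussianReal 0 1) hσm hb1 0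
    have h2 := keyDeriv1 (μ := gaussianReal 0 1) hm2 hb2 0
    have e1 : (∫ z, hh1 (σ z) 0 ∂(gaussianReal 0 1))
        = (∫ z, σ z ∂(gaussianReal 0 1)) / 2 := by
      simp only [hh1, zero_mul, Real.exp_zero, show (1 : ℝ) + 1 = 2 from by norm_num]
      rw [integral_div]
    have e2 : (∫ z, hh1 (-(σ (z + δ))) 0 ∂(gaussianReal 0 1))
        = -(∫ z, σ (z + δ) ∂(gaussianReal 0 1)) / 2 := by
      simp only [hh1, zero_mul, Real.exp_zero, show (1 : ℝ) + 1 = 2 from by norm_num]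
      rw [integral_div, integral_neg]
    have hval : (1 / 2 : ℝ) * ((∫ z, σ z ∂(gaussianReal 0 1))
          - (∫ z, σ (z + δ) ∂(gaussianReal 0 1)))
        = (∫ z, hh1 (σ z) 0 ∂(gaussianReal 0 1))
          + (∫ z, hh1 (-(σ (z + δ))) 0 ∂(gaussianReal 0 1)) := by
      rw [e1, e2]; ring
    rw [hval]
    exact h1.add h2
  · intro t
    have hD1 : deriv (fun t => (∫ z, hh (σ z) t ∂(gaussianReal 0 1)) +
          (∫ z, hh (-(σ (z + δ))) t ∂(gaussianReal 0 1)))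
        = fun s => (∫ z, hh1 (σ z) s ∂(gaussianReal 0 1)) +
          (∫ z, hh1 (-(σ (z + δ))) s ∂(gaussianReal 0 1)) := by
      funext s
      exact ((keyDeriv1 (μ := gaussianReal 0 1) hσm hb1 s).add (keyDeriv1 (μ := gaussianReal 0 1) hm2 hb2 s)).deriv
    rw [hD1]
    have hD2 : deriv (fun s => (∫ z, hh1 (σ z) s ∂(gaussianReal 0 1)) +
          (∫ z, hh1 (-(σ (z + δ))) s ∂(gaussianReal 0 1))) t
        = (∫ z, hh2 (σ z) t ∂(gaussianReal 0 1)) +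
          (∫ z, hh2 (-(σ (z + δ))) t ∂(gaussianReal 0 1)) :=
      ((keyDeriv2 (μ := gaussianReal 0 1) hσm hb1 t).add (keyDeriv2 (μ := gaussianReal 0 1) hm2 hb2 t)).deriv
    rw [hD2]
    have l1 := key_int_lower (μ := gaussianReal 0 1) hσm hb1 t
    have l2 := key_int_lower (μ := gaussianReal 0 1) hm2 hb2 t
    linarith
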